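/- Let A ∈ B(H'), B ∈ B(H), X ∈ B(H,H') and set C = AX − XB. Then for any single-variable polynomials p and q of degree at most d, there exist operators S_1,…,S_d ∈ B(H') and T_1,…,T_d ∈ B(H) such that p(A) X q(B) − q(A) X p(B) = ∑_{j=1}^d S_j C T_j. -/

import Mathlib

open ContinuousLinearMap Polynomial

private lemma sylvester_key
    {H H' : Type*} [NormedAddCommGroup H] [InnerProductSpace ℂ H] [CompleteSpace H]
    [NormedAddCommGroup H'] [InnerProductSpace ℂ H'] [CompleteSpace H']
    (A : H' →L[ℂ] H') (B : H →L[ℂ] H) (X : H →L[ℂ] H') :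
    ∀ (d : ℕ) (p : Polynomial ℂ), p.natDegree ≤ d →
      (aeval A p).comp X - X.comp (aeval B p) =
        ∑ i : Fin d, (A ^ (i : ℕ)).comp ((A.comp X - X.comp B).comp
          (aeval B (Polynomial.divX^[(i : ℕ) + 1] p))) := by
  intro d
  induction d with
  | zero =>
    intro p hp
    obtain ⟨c, rfl⟩ := Polynomial.natDegree_eq_zero.mp (Nat.le_zero.mp hp)
    rw [Finset.univ_eq_empty, Finset.sum_empty]
    ext x
    simp [Polynomial.aeval_C, Algebra.algebraMap_eq_smul_one]
  | succ d ih =>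
    intro p hp
    set q := p.divX with hqdef
    have hq : q.natDegree ≤ d := by
      rw [hqdef, Polynomial.natDegree_divX_eq_natDegree_tsub_one]
      omega
    have hA : aeval A p = A.comp (aeval A q) + (p.coeff 0) • 1 := by
      conv_lhs => rw [← Polynomial.X_mul_divX_add p]
      rw [map_add, map_mul, Polynomial.aeval_X, Polynomial.aeval_C,
        Algebra.algebraMap_eq_smul_one]
      rfl
    have hB : aeval B p = B.comp (aeval B q) + (p.coeff 0) • 1 := by
      conv_lhs => rw [← Polynomial.X_mul_divX_add p]
      rw [map_add, map_mul, Polynomial.aeval_X, Polynomial.aeval_C,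
        Algebra.algebraMap_eq_smul_one]
      rfl
    have key : (aeval A p).comp X - X.comp (aeval B p) =
        A.comp ((aeval A q).comp X - X.comp (aeval B q)) +
          (A.comp X - X.comp B).comp (aeval B q) := by
      rw [hA, hB]
      ext x
      simp only [sub_apply, add_apply, comp_apply, smul_apply, map_sub, ContinuousLinearMap.one_apply,
        map_add, ContinuousLinearMap.map_smul]
      abel
    rw [key, ih q hq, Fin.sum_univ_succ]
    have h0 : (A.comp X - X.comp B).comp (aeval B q) =
        (A ^ ((0 : Fin (d+1)) : ℕ)).comp ((A.comp X - X.comp B).comp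
          (aeval B (Polynomial.divX^[((0 : Fin (d+1)) : ℕ) + 1] p))) := by
      ext x
      simp [hqdef]
    have hs : A.comp (∑ i : Fin d, (A ^ (i : ℕ)).comp ((A.comp X - X.comp B).comp
          (aeval B (Polynomial.divX^[(i : ℕ) + 1] q)))) =
        ∑ i : Fin d, (A ^ ((i.succ : Fin (d+1)) : ℕ)).comp ((A.comp X - X.comp B).comp
          (aeval B (Polynomial.divX^[((i.succ : Fin (d+1)) : ℕ) + 1] p))) := by
      rw [ContinuousLinearMap.comp_finset_sum]
      apply Finset.sum_congr rfl
      intro i _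
      have hiter : Polynomial.divX^[(i : ℕ) + 1] q
          = Polynomial.divX^[((i.succ : Fin (d+1)) : ℕ) + 1] p := by
        rw [hqdef, ← Function.iterate_succ_apply]
        rfl
      rw [hiter, ← ContinuousLinearMap.comp_assoc]
      congr 1
      ext x
      simp [Fin.val_succ, pow_succ', ContinuousLinearMap.mul_def]
    rw [h0, hs, add_comm]

theorem sylvester_polynomial_identity
    {H H' : Type*} [NormedAddCommGroup H] [InnerProductSpace ℂ H] [CompleteSpace H]
    [NormedAddCommGroup H'] [InnerProductSpace ℂ H'] [CompleteSpace H']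
    (A : H' →L[ℂ] H') (B : H →L[ℂ] H) (X : H →L[ℂ] H')
    (C : H →L[ℂ] H') (hC : C = A.comp X - X.comp B)
    (d : ℕ) (p q : Polynomial ℂ) (hp : p.natDegree ≤ d) (hq : q.natDegree ≤ d) :
    ∃ (S : Fin d → (H' →L[ℂ] H')) (T : Fin d → (H →L[ℂ] H)),
      (aeval A p).comp (X.comp (aeval B q)) - (aeval A q).comp (X.comp (aeval B p)) =
        ∑ j : Fin d, (S j).comp (C.comp (T j)) := by
  refine ⟨fun j => A ^ (j : ℕ),
    fun j => (aeval B (Polynomial.divX^[(j : ℕ) + 1] p)).comp (aeval B q) -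
      (aeval B (Polynomial.divX^[(j : ℕ) + 1] q)).comp (aeval B p), ?_⟩
  have hcomm : (aeval B p).comp (aeval B q) = (aeval B q).comp (aeval B p) := by
    have h1 := map_mul (aeval B) p q
    have h2 := map_mul (aeval B) q p
    rw [mul_comm] at h1
    simpa [ContinuousLinearMap.mul_def] using h1.symm.trans h2
  have hp' := sylvester_key A B X d p hp
  have hq' := sylvester_key A B X d q hq
  have expand : (aeval A p).comp (X.comp (aeval B q)) - (aeval A q).comp (X.comp (aeval B p)) =
      ((aeval A p).comp X - X.comp (aeval B p)).comp (aeval B q) -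
        ((aeval A q).comp X - X.comp (aeval B q)).comp (aeval B p) := by
    rw [ContinuousLinearMap.sub_comp, ContinuousLinearMap.sub_comp,
      ContinuousLinearMap.comp_assoc, ContinuousLinearMap.comp_assoc,
      ContinuousLinearMap.comp_assoc, ContinuousLinearMap.comp_assoc, hcomm]
    abel
  rw [expand, hp', hq', ContinuousLinearMap.finset_sum_comp,
    ContinuousLinearMap.finset_sum_comp, ← Finset.sum_sub_distrib]
  apply Finset.sum_congr rfl
  intro j _
  rw [hC]
  ext x
  simp only [sub_apply, comp_apply, map_sub]
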